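/- Let A = ⊕_{i∈I} A_i be an I-graded k-algebra such that A_0 = k·1_A. If A is Noetherian, then A is finitely generated as a k-algebra. -/

import Mathlib

private theorem decompose_sum_apply_aux {k I A : Type*} [Semiring k] [AddCommMonoid I]
    [DecidableEq I] [Ring A] [Module k A] (𝒜 : I → Submodule k A)
    [DirectSum.Decomposition 𝒜] {γ : Type*} (s : Finset γ) (f : γ → A) (i : I) :
    ((DirectSum.decompose 𝒜 (∑ x ∈ s, f x)) i : A)
      = ∑ x ∈ s, ((DirectSum.decompose 𝒜 (f x)) i : A) := by
  classical
  induction s using Finset.induction_on with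
  | empty => simp
  | @insert _ _ hx ih =>
    rw [Finset.sum_insert hx, Finset.sum_insert hx, DirectSum.decompose_add,
      DirectSum.add_apply, Submodule.coe_add, ih]

/-- Let `k` be a field and `I` a commutative additive monoid with a partial
order `≤` such that `0 ≤ i` for all `i`, `i ≤ j → i + l ≤ j + l`, `i + j = i → j = 0`, and `≤`
is well-founded.  Let `A = ⊕_{i ∈ I} 𝒜 i` be an `I`-graded `k`-algebra with `𝒜 0 = k·1`.
If `A` is Noetherian, then `A` is finitely generated as a `k`-algebra. -/
theorem graded_noetherian_implies_finiteType
    {k : Type*} [Field k]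
    {I : Type*} [AddCommMonoid I] [PartialOrder I] [DecidableEq I]
    (hle0 : ∀ i : I, 0 ≤ i)
    (hcov : ∀ i j l : I, i ≤ j → i + l ≤ j + l)
    (hcancel : ∀ i j : I, i + j = i → j = 0)
    (hwf : WellFounded ((· < ·) : I → I → Prop))
    {A : Type*} [Ring A] [Algebra k A]
    (𝒜 : I → Submodule k A)
    (hinternal : DirectSum.IsInternal 𝒜)
    (hzero : 𝒜 0 = Submodule.span k {(1 : A)})
    (hgmul : ∀ i j : I, ∀ a ∈ 𝒜 i, ∀ b ∈ 𝒜 j, a * b ∈ 𝒜 (i + j))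
    (hNoeth : IsNoetherianRing A) :
    Algebra.FiniteType k A := by
  classical
  haveI : DirectSum.Decomposition 𝒜 := hinternal.chooseDecomposition
  set Spos : Set A := ⋃ i ∈ {i : I | i ≠ 0}, (𝒜 i : Set A) with hSpos
  have hfg : (Ideal.span Spos).FG := (isNoetherian_def.mp hNoeth) _
  -- extract a finite homogeneous generating set T ⊆ Spos
  obtain ⟨T, hTsub, hTspan⟩ :
      ∃ T : Finset A, (T : Set A) ⊆ Spos ∧ Ideal.span (T : Set A) = Ideal.span Spos := by
    obtain ⟨G, hG⟩ := hfg
    have hGmem : ∀ x ∈ (G : Set A), ∃ T : Finset A,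
        (T : Set A) ⊆ Spos ∧ x ∈ Ideal.span (T : Set A) := by
      intro x hx
      have hx' : x ∈ Ideal.span Spos := by
        rw [← hG]; exact Ideal.subset_span hx
      exact Submodule.mem_span_finite_of_mem_span hx'
    choose f hf1 hf2 using hGmem
    refine ⟨G.attach.biUnion (fun x => f x.1 x.2), ?_, le_antisymm ?_ ?_⟩
    · intro t ht
      simp only [Finset.coe_biUnion, Set.mem_iUnion] at ht
      obtain ⟨x, hx, ht⟩ := ht
      exact hf1 x.1 x.2 ht
    · exact Ideal.span_mono (by
        intro t ht
        simp only [Finset.coe_biUnion, Set.mem_iUnion] at ht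
        obtain ⟨x, hx, ht⟩ := ht
        exact hf1 x.1 x.2 ht)
    · rw [← hG]
      rw [Ideal.span_le]
      intro x hx
      refine Ideal.span_mono ?_ (hf2 x hx)
      intro t ht
      simp only [Finset.coe_biUnion, Set.mem_iUnion]
      exact ⟨⟨x, hx⟩, G.mem_attach _, ht⟩
  -- each element of T is homogeneous of nonzero degree
  have hTdeg : ∀ t ∈ T, ∃ d : I, d ≠ 0 ∧ t ∈ 𝒜 d := by
    intro t ht
    have := hTsub ht
    simp only [hSpos, Set.mem_iUnion, Set.mem_setOf_eq, SetLike.mem_coe] at this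
    obtain ⟨d, hd, hdm⟩ := this
    exact ⟨d, hd, hdm⟩
  -- projection of a finite sum
  -- main induction: every homogeneous element lies in the adjoin
  have key : ∀ i : I, ∀ a ∈ 𝒜 i, a ∈ Algebra.adjoin k (T : Set A) := by
    intro i
    induction i using hwf.induction with
    | _ i IH =>
    intro a ha
    by_cases hi : i = 0
    · subst hi
      rw [hzero] at ha
      obtain ⟨c, rfl⟩ := Submodule.mem_span_singleton.mp ha
      exact Subalgebra.smul_mem _ (Subalgebra.one_mem _) c
    · -- a lies in the ideal generated by T
      have haM : a ∈ Ideal.span (T : Set A) := by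
        rw [hTspan]
        exact Ideal.subset_span (by
          simp only [hSpos, Set.mem_iUnion, Set.mem_setOf_eq, SetLike.mem_coe]
          exact ⟨i, hi, ha⟩)
      obtain ⟨c, hcsupp, hcsum⟩ := Submodule.mem_span_set.mp haM
      -- a equals its degree-i component
      have ha' : a = ∑ s ∈ c.support, ((DirectSum.decompose 𝒜 (c s * s)) i : A) := by
        have h1 : a = ∑ s ∈ c.support, c s * s := by
          rw [← hcsum, Finsupp.sum]
          exact Finset.sum_congr rfl fun x _ => (smul_eq_mul _ _).symm
        calc a = ((DirectSum.decompose 𝒜 a) i : A) :=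
              (DirectSum.decompose_of_mem_same 𝒜 ha).symm
          _ = ((DirectSum.decompose 𝒜 (∑ s ∈ c.support, c s * s)) i : A) := by rw [← h1]
          _ = _ := decompose_sum_apply_aux 𝒜 c.support (fun s => c s * s) i
      rw [ha']
      refine Subalgebra.sum_mem _ ?_
      intro s hs
      have hsT : s ∈ T := hcsupp hs
      obtain ⟨d, hd0, hsd⟩ := hTdeg s hsT
      -- decompose the coefficient c s
      have hcs : c s = ∑ j ∈ (DirectSum.decompose 𝒜 (c s)).support,
          ((DirectSum.decompose 𝒜 (c s)) j : A) := (DirectSum.sum_support_decompose 𝒜 (c s)).symm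
      have : ((DirectSum.decompose 𝒜 (c s * s)) i : A)
          = ∑ j ∈ (DirectSum.decompose 𝒜 (c s)).support,
              ((DirectSum.decompose 𝒜 (((DirectSum.decompose 𝒜 (c s)) j : A) * s)) i : A) := by
        have h2 : c s * s = ∑ j ∈ (DirectSum.decompose 𝒜 (c s)).support,
            ((DirectSum.decompose 𝒜 (c s)) j : A) * s := by
          rw [← Finset.sum_mul, ← hcs]
        rw [h2]
        exact decompose_sum_apply_aux 𝒜 _ (fun j => ((DirectSum.decompose 𝒜 (c s)) j : A) * s) i
      rw [this]
      refine Subalgebra.sum_mem _ ?_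
      intro j _
      set x : A := ((DirectSum.decompose 𝒜 (c s)) j : A) with hx
      have hxj : x ∈ 𝒜 j := SetLike.coe_mem _
      have hxs : x * s ∈ 𝒜 (j + d) := hgmul j d x hxj s hsd
      by_cases hji : j + d = i
      · have hji' : x * s ∈ 𝒜 i := hji ▸ hxs
        rw [DirectSum.decompose_of_mem_same 𝒜 hji']
        have hjlt : j < i := by
          have hle : j ≤ i := by
            have := hcov 0 d j (hle0 d)
            rw [zero_add, add_comm] at this
            rw [← hji]
            exact this
          refine lt_of_le_of_ne hle ?_
          intro hji2
          apply hd0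
          apply hcancel i d
          rw [← hji2] at hji ⊢
          rw [hji]
        exact Subalgebra.mul_mem _ (IH j hjlt x hxj) (Algebra.subset_adjoin hsT)
      · rw [DirectSum.decompose_of_mem_ne 𝒜 hxs hji]
        exact Subalgebra.zero_mem _
  -- conclude
  refine ⟨T, ?_⟩
  have hall : ∀ a : A, a ∈ Algebra.adjoin k (T : Set A) := by
    intro a
    induction a using DirectSum.Decomposition.inductionOn 𝒜 with
    | zero => exact Subalgebra.zero_mem _
    | homogeneous x => exact key _ _ x.2
    | add x y hx hy => exact Subalgebra.add_mem _ hx hy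
  exact eq_top_iff.mpr fun a _ => hall a
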